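/- The quaternion algebra B = (w+1, -1 / F) over F = Q(w), w^3 - 11w - 11 = 0, is unramified at every finite place of F (its discriminant is the trivial ideal). -/

import Mathlib

open Quaternion NumberField IsDedekindDomain

namespace Stmt12Aux

open Matrix Multiplicative Filter Topology Polynomial
open scoped WithZero

theorem zm_mul_lt_mul {x y z : ℤᵐ⁰} (hx : x ≠ 0) (h : y < z) : x * y < x * z :=
  mul_lt_mul_of_pos_left h (zero_lt_iff.mpr hx)


variable {K : Type} [Field K]

noncomputable def quatBasis (a b x y : K) (h : x ^ 2 - b * y ^ 2 = a) :
    QuaternionAlgebra.Basis (Matrix (Fin 2) (Fin 2) K) a 0 b where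
  i := !![x, -(b*y); y, -x]
  j := !![0, b; 1, 0]
  k := !![-(b*y), b*x; -x, b*y]
  i_mul_i := by
    subst h
    rw [zero_smul, add_zero, Matrix.mul_fin_two, Matrix.smul_one_eq_diagonal]
    ext i j
    fin_cases i <;> fin_cases j <;> simp [Matrix.diagonal] <;> ring
  j_mul_j := by
    rw [Matrix.mul_fin_two, Matrix.smul_one_eq_diagonal]
    ext i j
    fin_cases i <;> fin_cases j <;> simp [Matrix.diagonal]
  i_mul_j := by
    rw [Matrix.mul_fin_two]
    ext i j
    fin_cases i <;> fin_cases j <;> simp <;> ring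
  j_mul_i := by
    rw [zero_smul, zero_sub, Matrix.mul_fin_two]
    ext i j
    fin_cases i <;> fin_cases j <;> simp <;> ring



noncomputable def psi {K : Type} [Field K] (b x y : K) (M : Matrix (Fin 2) (Fin 2) K) :
    ℍ[K, x ^ 2 - b * y ^ 2, b] :=
  ⟨(M 0 0 + M 1 1) / 2,
   (x * (M 0 0 - M 1 1) + y * (M 0 1 - b * M 1 0)) / (2 * (x ^ 2 - b * y ^ 2)),
   (M 0 1 + b * M 1 0) / (2 * b),
   (b * y * (M 0 0 - M 1 1) + x * (M 0 1 - b * M 1 0)) / (2 * b * (x ^ 2 - b * y ^ 2))⟩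

set_option maxHeartbeats 1000000 in
theorem quat_split {K : Type} [Field K] (a b x y : K) (h : x ^ 2 - b * y ^ 2 = a)
    (ha : a ≠ 0) (hb : b ≠ 0) (h2 : (2 : K) ≠ 0) :
    Nonempty (ℍ[K, a, b] ≃ₐ[K] Matrix (Fin 2) (Fin 2) K) := by
  subst h
  have d1 : (2 : K) * (x ^ 2 - b * y ^ 2) ≠ 0 := mul_ne_zero h2 ha
  have d2 : (2 : K) * b ≠ 0 := mul_ne_zero h2 hb
  have d3 : (2 : K) * b * (x ^ 2 - b * y ^ 2) ≠ 0 := mul_ne_zero d2 ha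
  let B := quatBasis (x ^ 2 - b * y ^ 2) b x y rfl
  let φ := B.liftHom
  have hφ : ∀ q : ℍ[K, x ^ 2 - b * y ^ 2, b], ∀ i j, φ q i j =
      algebraMap K (Matrix (Fin 2) (Fin 2) K) q.re i j + q.imI • B.i i j
        + q.imJ • B.j i j + q.imK • B.k i j := by
    intro q i j
    show B.lift q i j = _
    simp [QuaternionAlgebra.Basis.lift, Matrix.add_apply]
  have hleft : Function.LeftInverse (psi b x y) φ := by
    intro q
    have e00 := hφ q 0 0
    have e01 := hφ q 0 1
    have e10 := hφ q 1 0
    have e11 := hφ q 1 1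
    simp [B, quatBasis, Matrix.algebraMap_matrix_apply] at e00 e01 e10 e11
    ext
    · simp only [psi, e00, e01, e10, e11]
      field_simp
      ring
    · simp only [psi, e00, e01, e10, e11]
      field_simp [d1]
      ring
    · simp only [psi, e00, e01, e10, e11]
      field_simp [d2]
      ring
    · simp only [psi, e00, e01, e10, e11]
      field_simp [d3]
      ring
  have hright : Function.RightInverse (psi b x y) φ := by
    intro M
    ext i j
    rw [hφ]
    fin_cases i <;> fin_cases j <;>
      · simp [psi, B, quatBasis, Matrix.algebraMap_matrix_apply]
        field_simp [d1, d2, d3, show x ^ 2 - y ^ 2 * b ≠ 0 by rwa [mul_comm (y ^ 2) b]]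
        ring
  exact ⟨AlgEquiv.ofBijective φ
    (Function.bijective_iff_has_inverse.mpr ⟨psi b x y, hleft, hright⟩)⟩




theorem pow_small (ρ ε : ℤᵐ⁰) (hρ : ρ < 1) (hε : ε ≠ 0) : ∃ n : ℕ, ρ ^ n < ε := by
  rcases eq_or_ne ρ 0 with rfl | hρ0
  · exact ⟨1, by rw [pow_one]; exact zero_lt_iff.mpr hε⟩
  · lift ρ to Multiplicative ℤ using hρ0
    lift ε to Multiplicative ℤ using hε
    have hm : toAdd ρ < 0 := by
      rw [← WithZero.coe_one, WithZero.coe_lt_coe] at hρ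
      exact Multiplicative.toAdd_lt.mpr hρ
    refine ⟨(toAdd ε).natAbs + 1, ?_⟩
    rw [← WithZero.coe_pow, WithZero.coe_lt_coe, ← Multiplicative.toAdd_lt, toAdd_pow]
    have h1 : (((toAdd ε).natAbs + 1 : ℕ) : ℤ) * toAdd ρ
        ≤ (((toAdd ε).natAbs + 1 : ℕ) : ℤ) * (-1) :=
      mul_le_mul_of_nonneg_left (by omega) (by positivity)
    rw [nsmul_eq_mul]
    omega

theorem zm_lt_of_mul_lt_mul {x y z : ℤᵐ⁰} (h : x * z < y * z) : x < y := by
  by_contra h'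
  exact absurd (mul_le_mul_left (not_lt.mp h') z) (not_le.mpr h)

theorem zm_le_of_mul_le_mul {x y z : ℤᵐ⁰} (hz : z ≠ 0) (h : x * z ≤ y * z) : x ≤ y := by
  by_contra h'
  have : z * y < z * x := mul_lt_mul_of_pos_left (not_le.mp h') (zero_lt_iff.mpr hz)
  rw [mul_comm z y, mul_comm z x] at this
  exact absurd h (not_le.mpr this)

set_option maxHeartbeats 1000000 in
theorem hensel_sq {K : Type} [Field K] [vK : Valued K ℤᵐ⁰] [CompleteSpace K]
    (c s : K) (h : Valued.v (s ^ 2 - c) < (Valued.v (2 * s)) ^ 2) :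
    ∃ x : K, x ^ 2 = c := by
  classical
  rcases eq_or_ne (s ^ 2 - c) 0 with hd | hd
  · exact ⟨s, by rwa [sub_eq_zero] at hd⟩
  set v : Valuation K ℤᵐ⁰ := Valued.v with hv
  set γ : ℤᵐ⁰ := v (s ^ 2 - c) with hγ
  set δ : ℤᵐ⁰ := v (2 * s) with hδ
  have hγ0 : γ ≠ 0 := by simpa [hγ] using hd
  have hγδ : γ < δ ^ 2 := h
  have hδ0 : δ ≠ 0 := by
    intro h0
    rw [h0] at hγδ
    simp at hγδ
  have h2s : (2 : K) * s ≠ 0 := by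
    intro h0
    exact hδ0 (by rw [hδ, h0, map_zero])
  have hv2 : v (2 : K) ≤ 1 := by
    have := v.map_add 1 1
    simpa [one_add_one_eq_two] using this
  -- the Newton iteration
  set T : K → K := fun t => t - (t ^ 2 - c) / (2 * t) with hT
  set A : ℕ → K := fun n => T^[n] s with hA
  have hA0 : A 0 = s := rfl
  have hAsucc : ∀ n, A (n + 1) = T (A n) := fun n => by
    simp only [hA, Function.iterate_succ_apply']
  -- main invariant
  have inv : ∀ n, v (2 * A n) = δ ∧ v (A n ^ 2 - c) ≤ γ := by
    intro n
    induction n with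
    | zero => exact ⟨rfl, le_rfl⟩
    | succ n ih =>
      obtain ⟨h1, h3⟩ := ih
      have ht0 : (2 : K) * A n ≠ 0 := fun h0 => hδ0 (by rw [← h1, h0, map_zero])
      have htA : A n ≠ 0 := by
        intro h0; apply ht0; rw [h0, mul_zero]
      set e : K := (A n ^ 2 - c) / (2 * A n) with he
      have hee : e * (2 * A n) = A n ^ 2 - c := div_mul_cancel₀ _ ht0
      have hveδ : v e * δ = v (A n ^ 2 - c) := by
        rw [← h1, ← _root_.map_mul, hee]
      -- v (2 * e) < δ
      have h2e : v (2 * e) < δ := by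
        apply zm_lt_of_mul_lt_mul (z := δ)
        calc v (2 * e) * δ = v (2 : K) * (v e * δ) := by rw [_root_.map_mul, mul_assoc]
          _ ≤ 1 * (v e * δ) := mul_le_mul_left hv2 _
          _ = v (A n ^ 2 - c) := by rw [one_mul, hveδ]
          _ ≤ γ := h3
          _ < δ ^ 2 := hγδ
          _ = δ * δ := sq δ
      have hnew : A (n + 1) = A n - e := by rw [hAsucc, hT]
      have hsub : (2 : K) * A (n + 1) = 2 * A n - 2 * e := by rw [hnew]; ring
      have hc1 : v (2 * A (n + 1)) = δ := by
        rw [hsub, v.map_sub_eq_of_lt_left (by rw [h1]; exact h2e), h1]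
      -- the new error is e ^ 2
      have herr : A (n + 1) ^ 2 - c = e ^ 2 := by
        rw [hnew, he]
        field_simp [left_ne_zero_of_mul ht0, right_ne_zero_of_mul ht0]
        ring
      have hv2n : v (A (n + 1) ^ 2 - c) * δ ^ 2 = v (A n ^ 2 - c) ^ 2 := by
        rw [herr, map_pow, ← hveδ, mul_pow]
      refine ⟨hc1, ?_⟩
      apply zm_le_of_mul_le_mul (pow_ne_zero 2 hδ0)
      calc v (A (n + 1) ^ 2 - c) * δ ^ 2 = v (A n ^ 2 - c) ^ 2 := hv2n
        _ ≤ γ * γ := by rw [sq]; exact mul_le_mul' h3 h3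
        _ ≤ γ * δ ^ 2 := mul_le_mul_right (le_of_lt hγδ) γ
  -- step identities
  have step : ∀ n, v (A (n + 1) ^ 2 - c) * δ ^ 2 = v (A n ^ 2 - c) ^ 2 ∧
      v (A (n + 1) - A n) * δ = v (A n ^ 2 - c) := by
    intro n
    obtain ⟨h1, h3⟩ := inv n
    have ht0 : (2 : K) * A n ≠ 0 := fun h0 => hδ0 (by rw [← h1, h0, map_zero])
    set e : K := (A n ^ 2 - c) / (2 * A n) with he
    have hee : e * (2 * A n) = A n ^ 2 - c := div_mul_cancel₀ _ ht0
    have hveδ : v e * δ = v (A n ^ 2 - c) := by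
      rw [← h1, ← _root_.map_mul, hee]
    have hnew : A (n + 1) = A n - e := by rw [hAsucc, hT]
    have herr : A (n + 1) ^ 2 - c = e ^ 2 := by
      rw [hnew, he]
      field_simp [left_ne_zero_of_mul ht0, right_ne_zero_of_mul ht0]
      ring
    constructor
    · rw [herr, map_pow, ← hveδ, mul_pow]
    · rw [hnew, sub_sub_cancel_left, v.map_neg, hveδ]
  -- decay of the error
  have dec : ∀ n, v (A n ^ 2 - c) * (δ ^ 2) ^ n ≤ γ ^ (n + 1) := by
    intro n
    induction n with
    | zero =>
      rw [pow_zero, mul_one, pow_one, hA0]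
    | succ n ih =>
      have h3 := (inv n).2
      calc v (A (n + 1) ^ 2 - c) * (δ ^ 2) ^ (n + 1)
          = v (A (n + 1) ^ 2 - c) * δ ^ 2 * (δ ^ 2) ^ n := by
            rw [_root_.pow_succ' (δ ^ 2) n, ← mul_assoc]
        _ = v (A n ^ 2 - c) ^ 2 * (δ ^ 2) ^ n := by rw [(step n).1]
        _ = v (A n ^ 2 - c) * (v (A n ^ 2 - c) * (δ ^ 2) ^ n) := by
            rw [sq, mul_assoc]
        _ ≤ γ * γ ^ (n + 1) := mul_le_mul' h3 ih
        _ = γ ^ (n + 2) := by rw [← _root_.pow_succ' γ (n + 1)]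
  -- smallness of the error
  set ρ : ℤᵐ⁰ := γ / δ ^ 2 with hρdef
  have hδ20 : (δ : ℤᵐ⁰) ^ 2 ≠ 0 := pow_ne_zero 2 hδ0
  have hρ1 : ρ < 1 := by
    rw [hρdef, div_lt_iff₀ (zero_lt_iff.mpr hδ20), one_mul]
    exact hγδ
  have small : ∀ ε : ℤᵐ⁰, ε ≠ 0 → ∃ N, ∀ n, N ≤ n → v (A n ^ 2 - c) < ε := by
    intro ε hε
    obtain ⟨N, hN⟩ := pow_small ρ (ε / γ) hρ1 (div_ne_zero hε hγ0)
    refine ⟨N, fun n hn => ?_⟩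
    have hρn : ρ ^ n < ε / γ :=
      lt_of_le_of_lt (pow_le_pow_right_of_le_one' (le_of_lt hρ1) hn) hN
    have hmul : γ * (δ ^ 2) ^ n * ρ ^ n < γ * (δ ^ 2) ^ n * (ε / γ) :=
      mul_lt_mul_of_pos_left hρn
        (zero_lt_iff.mpr (mul_ne_zero hγ0 (pow_ne_zero _ hδ20)))
    have hL : γ * (δ ^ 2) ^ n * ρ ^ n = γ ^ (n + 1) := by
      rw [mul_assoc, ← mul_pow, hρdef, mul_comm (δ ^ 2), div_mul_cancel₀ _ hδ20,
        ← _root_.pow_succ']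
    have hR : γ * (δ ^ 2) ^ n * (ε / γ) = ε * (δ ^ 2) ^ n := by
      rw [mul_comm γ, mul_assoc, mul_comm γ, div_mul_cancel₀ _ hγ0, mul_comm]
    rw [hL, hR] at hmul
    exact zm_lt_of_mul_lt_mul (lt_of_le_of_lt (dec n) hmul)
  -- differences decrease
  have Dmono : ∀ n, v (A (n + 2) - A (n + 1)) ≤ v (A (n + 1) - A n) := by
    intro n
    apply zm_le_of_mul_le_mul hδ0
    rw [(step n).2, (step (n + 1)).2]
    -- v (A (n+1) ^ 2 - c) ≤ v (A n ^ 2 - c)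
    apply zm_le_of_mul_le_mul hδ20
    rw [(step n).1, sq]
    calc v (A n ^ 2 - c) * v (A n ^ 2 - c)
        ≤ γ * v (A n ^ 2 - c) := mul_le_mul_left (inv n).2 _
      _ ≤ δ ^ 2 * v (A n ^ 2 - c) := mul_le_mul_left (le_of_lt hγδ) _
      _ = v (A n ^ 2 - c) * δ ^ 2 := mul_comm _ _
  have Dantitone : ∀ n m, n ≤ m → v (A (m + 1) - A m) ≤ v (A (n + 1) - A n) := by
    intro n m hnm
    induction m, hnm using Nat.le_induction with
    | base => exact le_rfl
    | succ m hnm ih => exact le_trans (Dmono m) ih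
  have Cdiff : ∀ n m, n ≤ m → v (A m - A n) ≤ v (A (n + 1) - A n) := by
    intro n m hnm
    induction m, hnm using Nat.le_induction with
    | base => simp
    | succ m hnm ih =>
      have : A (m + 1) - A n = (A (m + 1) - A m) + (A m - A n) := by ring
      rw [this]
      exact le_trans (v.map_add _ _)
        (max_le (Dantitone n m hnm) ih)
  -- the sequence is Cauchy
  have hCauchy : CauchySeq A := by
    rw [(Valued.hasBasis_uniformity K ℤᵐ⁰).cauchySeq_iff]
    intro ε _
    set ε' : ℤᵐ⁰ := MonoidWithZeroHom.ValueGroup₀.embedding ε.1 with hε'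
    have hε0 : ε' ≠ 0 := by
      intro h0
      exact ε.ne_zero (MonoidWithZeroHom.ValueGroup₀.embedding_strictMono.injective (by rw [← hε', h0, map_zero]))
    obtain ⟨N, hN⟩ := small (ε' * δ) (mul_ne_zero hε0 hδ0)
    refine ⟨N, fun m hm n hn => ?_⟩
    show v.restrict (A n - A m) < ε.1
    rw [Valuation.restrict_lt_iff_lt_embedding]
    have key : ∀ a b, N ≤ a → a ≤ b → v (A b - A a) < ε' := by
      intro a b ha hab
      refine lt_of_le_of_lt (Cdiff a b hab) ?_
      apply zm_lt_of_mul_lt_mul (z := δ)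
      rw [(step a).2]
      exact hN a ha
    rcases le_total m n with hmn | hnm
    · exact key m n hm hmn
    · rw [v.map_sub_swap]
      exact key n m hn hnm
  obtain ⟨x, hx⟩ := cauchySeq_tendsto_of_complete hCauchy
  refine ⟨x, ?_⟩
  have t1 : Tendsto (fun n => A n ^ 2 - c) atTop (𝓝 (x ^ 2 - c)) :=
    (hx.pow 2).sub_const c
  have t2 : Tendsto (fun n => A n ^ 2 - c) atTop (𝓝 0) := by
    rw [(Valued.hasBasis_nhds_zero K ℤᵐ⁰).tendsto_right_iff]
    intro ε _
    set ε' : ℤᵐ⁰ := MonoidWithZeroHom.ValueGroup₀.embedding ε.1 with hε'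
    have hε0 : ε' ≠ 0 := by
      intro h0
      exact ε.ne_zero (MonoidWithZeroHom.ValueGroup₀.embedding_strictMono.injective (by rw [← hε', h0, map_zero]))
    obtain ⟨N, hN⟩ := small ε' hε0
    exact eventually_atTop.mpr ⟨N, fun n hn => (Valuation.restrict_lt_iff_lt_embedding _).mpr (hN n hn)⟩
  have := tendsto_nhds_unique t1 t2
  rwa [sub_eq_zero] at this



end Stmt12Aux

open Stmt12Aux Polynomial
open scoped Multiplicative
open scoped WithZero


set_option maxHeartbeats 2000000 in
set_option synthInstance.maxHeartbeats 400000 in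
theorem stmt12 (F : Type) [Field F] [NumberField F] (w : F)
    (hw : w ^ 3 - 11 * w - 11 = 0) (hgen : Algebra.adjoin ℚ {w} = ⊤) :
    ∀ v : HeightOneSpectrum (𝓞 F),
      Nonempty (ℍ[v.adicCompletion F, algebraMap F (v.adicCompletion F) (w + 1),
          algebraMap F (v.adicCompletion F) (-1)]
        ≃ₐ[v.adicCompletion F] Matrix (Fin 2) (Fin 2) (v.adicCompletion F)) := by
  intro v
  classical
  -- w is an algebraic integer
  have hwint : IsIntegral ℤ w := by
    refine ⟨X ^ 3 - (11 * X + 11), by monicity!, ?_⟩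
    simp only [eval₂_sub, eval₂_add, eval₂_mul, eval₂_pow, eval₂_X, eval₂_ofNat]
    linear_combination hw
  set W : 𝓞 F := ⟨w, hwint⟩ with hW
  have cW : algebraMap (𝓞 F) F W = w := rfl
  set K := v.adicCompletion F with hK
  haveI hKchar : CharZero K := charZero_of_injective_algebraMap (algebraMap F K).injective
  -- basic coercion facts
  have htower : ∀ r : 𝓞 F, algebraMap F K (algebraMap (𝓞 F) F r) = algebraMap (𝓞 F) K r :=
    fun r => (IsScalarTower.algebraMap_apply _ _ _ r).symm
  have hval : ∀ r : 𝓞 F, Valued.v (algebraMap (𝓞 F) K r) = v.valuation F (algebraMap (𝓞 F) F r) :=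
    fun r => v.valuedAdicCompletion_eq_valuation r
  have hle1 : ∀ r : 𝓞 F, Valued.v (algebraMap (𝓞 F) K r) ≤ 1 := fun r => by
    rw [hval]; exact v.valuation_le_one r
  have hlt1 : ∀ r : 𝓞 F, r ∈ v.asIdeal ↔ Valued.v (algebraMap (𝓞 F) K r) < 1 := fun r => by
    rw [hval, v.valuation_lt_one_iff_dvd, Ideal.dvd_span_singleton]
  have h2K : algebraMap (𝓞 F) K (2 : 𝓞 F) = (2 : K) := map_ofNat _ 2
  -- arithmetic identities in 𝓞 F
  have id1 : ((W + 1) * (W ^ 2 - W - 10) : 𝓞 F) = 1 := by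
    apply RingOfIntegers.coe_injective
    simp only [map_mul, map_add, map_sub, map_pow, map_one, map_ofNat, cW]
    linear_combination hw
  have id8 : ((1 + W + 2 * W ^ 2) ^ 2 + (2 * W + W ^ 2) ^ 2 - (W + 1) : 𝓞 F)
      = 2 ^ 3 * (11 + 18 * W + 8 * W ^ 2) := by
    apply RingOfIntegers.coe_injective
    simp only [map_mul, map_add, map_sub, map_pow, map_one, map_ofNat, cW]
    linear_combination (8 + 5 * w) * hw
  have id2 : ((1 + W + 2 * W ^ 2) * (W + W ^ 2) : 𝓞 F) = 1 + 2 * (16 + 28 * W + 12 * W ^ 2) := by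
    apply RingOfIntegers.coe_injective
    simp only [map_mul, map_add, map_sub, map_pow, map_one, map_ofNat, cW]
    linear_combination (3 + 2 * w) * hw
  have humap : algebraMap F K (w + 1) = algebraMap (𝓞 F) K (W + 1) := by
    have hc : algebraMap (𝓞 F) F (W + 1) = w + 1 := by rw [map_add, map_one, cW]
    rw [← hc]
    exact htower _
  -- the Hensel step, common to both cases
  have solve : ∀ x0 y0 : 𝓞 F,
      Valued.v (algebraMap (𝓞 F) K (x0 ^ 2 + y0 ^ 2 - (W + 1)))
        < (Valued.v (algebraMap (𝓞 F) K (2 * x0))) ^ 2 →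
      ∃ X Y : K, X ^ 2 + Y ^ 2 = algebraMap F K (w + 1) := by
    intro x0 y0 hlt
    set s : K := algebraMap (𝓞 F) K x0 with hs
    set Y : K := algebraMap (𝓞 F) K y0 with hY
    have key : s ^ 2 - (algebraMap F K (w + 1) - Y ^ 2)
        = algebraMap (𝓞 F) K (x0 ^ 2 + y0 ^ 2 - (W + 1)) := by
      rw [humap, hs, hY]
      simp only [map_sub, map_add, map_pow, map_one]
      ring
    have h2s : (2 : K) * s = algebraMap (𝓞 F) K (2 * x0) := by
      rw [hs, map_mul, h2K]
    obtain ⟨X, hX⟩ := hensel_sq (algebraMap F K (w + 1) - Y ^ 2) s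
      (by rw [key, h2s]; exact hlt)
    exact ⟨X, Y, by rw [hX]; ring⟩
  -- produce a solution of X² + Y² = w + 1 in K
  obtain ⟨X, Y, hXY⟩ : ∃ X Y : K, X ^ 2 + Y ^ 2 = algebraMap F K (w + 1) := by
    by_cases h2v : (2 : 𝓞 F) ∈ v.asIdeal
    · -- the even case: explicit approximate solution mod 8
      apply solve (1 + W + 2 * W ^ 2) (2 * W + W ^ 2)
      have hV2lt : Valued.v (algebraMap (𝓞 F) K (2 : 𝓞 F)) < 1 := (hlt1 _).mp h2v
      have hV2ne : Valued.v (algebraMap (𝓞 F) K (2 : 𝓞 F)) ≠ 0 := by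
        rw [h2K, Valuation.ne_zero_iff]
        exact two_ne_zero
      -- v (x0) = 1
      have hVx : Valued.v (algebraMap (𝓞 F) K (1 + W + 2 * W ^ 2)) = 1 := by
        have hmem : (2 * (16 + 28 * W + 12 * W ^ 2) : 𝓞 F) ∈ v.asIdeal :=
          Ideal.mul_mem_right _ _ h2v
        have hsmall := (hlt1 _).mp hmem
        have hone : Valued.v (algebraMap (𝓞 F) K
            ((1 + W + 2 * W ^ 2) * (W + W ^ 2))) = 1 := by
          rw [id2, map_add, map_one]
          exact Valued.v.map_one_add_of_lt hsmall
        rw [map_mul, map_mul] at hone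
        refine le_antisymm (hle1 _) ?_
        calc (1 : ℤᵐ⁰) = _ := hone.symm
          _ ≤ Valued.v (algebraMap (𝓞 F) K (1 + W + 2 * W ^ 2)) * 1 :=
            mul_le_mul_right (hle1 _) _
          _ = _ := mul_one _
      have e1 : Valued.v (algebraMap (𝓞 F) K (2 ^ 3 * (11 + 18 * W + 8 * W ^ 2)))
          = Valued.v (algebraMap (𝓞 F) K (2 : 𝓞 F)) ^ 3
            * Valued.v (algebraMap (𝓞 F) K (11 + 18 * W + 8 * W ^ 2)) := by
        rw [map_mul, map_pow, Valuation.map_mul, Valuation.map_pow]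
      have e2 : Valued.v (algebraMap (𝓞 F) K (2 * (1 + W + 2 * W ^ 2)))
          = Valued.v (algebraMap (𝓞 F) K (2 : 𝓞 F)) := by
        rw [map_mul, Valuation.map_mul, hVx, mul_one]
      rw [id8, e1, e2]
      calc Valued.v (algebraMap (𝓞 F) K (2 : 𝓞 F)) ^ 3
            * Valued.v (algebraMap (𝓞 F) K (11 + 18 * W + 8 * W ^ 2))
          ≤ Valued.v (algebraMap (𝓞 F) K (2 : 𝓞 F)) ^ 3 * 1 :=
            mul_le_mul_right (hle1 _) _
        _ = Valued.v (algebraMap (𝓞 F) K (2 : 𝓞 F)) ^ 2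
            * Valued.v (algebraMap (𝓞 F) K (2 : 𝓞 F)) := by
            rw [mul_one, pow_succ]
        _ < Valued.v (algebraMap (𝓞 F) K (2 : 𝓞 F)) ^ 2 * 1 :=
            zm_mul_lt_mul (pow_ne_zero 2 hV2ne) hV2lt
        _ = Valued.v (algebraMap (𝓞 F) K (2 : 𝓞 F)) ^ 2 := mul_one _
    · -- the odd case: solve in the residue field and lift
      letI : Fintype (𝓞 F ⧸ v.asIdeal) := @Fintype.ofFinite _ (Ideal.finiteQuotientOfFreeOfNeBot v.asIdeal v.ne_bot)
      set k := 𝓞 F ⧸ v.asIdeal with hk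
      letI : Field k := Ideal.Quotient.field v.asIdeal
      set π : 𝓞 F →+* k := Ideal.Quotient.mk v.asIdeal with hπ
      have h2k : (π (2 : 𝓞 F)) ≠ 0 := by
        rw [Ne, Ideal.Quotient.eq_zero_iff_mem]
        exact h2v
      -- the residue field has odd cardinality
      have hodd : Fintype.card k % 2 = 1 := by
        obtain ⟨n, hp, hcard⟩ := FiniteField.card k (ringChar k)
        rw [hcard, ← Nat.odd_iff]
        apply Odd.pow
        apply hp.odd_of_ne_two
        intro hp2
        apply h2k
        have h20 : ((2 : ℕ) : k) = 0 := by
          rw [← hp2]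
          exact ringChar.Nat.cast_ringChar
        rw [map_ofNat]
        exact_mod_cast h20
      have hubar : π (W + 1) ≠ 0 := by
        intro h0
        have : (1 : k) = 0 := by
          rw [← map_one π, ← id1, map_mul, h0, zero_mul]
        exact one_ne_zero this
      obtain ⟨xq, yq, hxq0, hsum⟩ : ∃ xq yq : k, xq ≠ 0 ∧ xq ^ 2 + yq ^ 2 = π (W + 1) := by
        obtain ⟨a, b, hab⟩ := FiniteField.exists_root_sum_quadratic
          (f := (X ^ 2 : k[X])) (g := X ^ 2 - C (π (W + 1)))
          (degree_X_pow 2) (degree_X_pow_sub_C (by norm_num) _) hodd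
        simp only [eval_pow, eval_X, eval_sub, eval_C] at hab
        rcases eq_or_ne a 0 with ha0 | ha0
        · refine ⟨b, a, ?_, ?_⟩
          · intro hb0
            apply hubar
            rw [ha0, hb0] at hab
            linear_combination -hab
          · rw [add_comm]; linear_combination hab
        · exact ⟨a, b, ha0, by linear_combination hab⟩
      obtain ⟨x0, hx0⟩ := Ideal.Quotient.mk_surjective xq
      obtain ⟨y0, hy0⟩ := Ideal.Quotient.mk_surjective yq
      apply solve x0 y0
      have hdmem : (x0 ^ 2 + y0 ^ 2 - (W + 1) : 𝓞 F) ∈ v.asIdeal := by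
        rw [← Ideal.Quotient.eq_zero_iff_mem]
        show π _ = 0
        rw [map_sub, map_add, map_pow, map_pow, hx0, hy0, hsum, sub_self]
      have hx0mem : (2 * x0 : 𝓞 F) ∉ v.asIdeal := by
        intro hmem
        rcases Ideal.IsPrime.mem_or_mem v.isPrime hmem with h | h
        · exact h2v h
        · apply hxq0
          rw [← hx0]
          exact Ideal.Quotient.eq_zero_iff_mem.mpr h
      have hV1 : Valued.v (algebraMap (𝓞 F) K (2 * x0)) = 1 := by
        refine le_antisymm (hle1 _) ?_
        rcases lt_or_ge (Valued.v (algebraMap (𝓞 F) K (2 * x0))) 1 with hlt | hge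
        · exact absurd ((hlt1 _).mpr hlt) hx0mem
        · exact hge
      rw [hV1, one_pow]
      exact (hlt1 _).mp hdmem
  -- assemble the quaternion algebra isomorphism
  have hw1ne : w + 1 ≠ 0 := by
    intro h0
    have hwm : w = -1 := by linear_combination h0
    rw [hwm] at hw
    norm_num at hw
  refine quat_split (algebraMap F K (w + 1)) (algebraMap F K (-1)) X Y ?_ ?_ ?_ ?_
  · rw [map_neg, map_one]
    linear_combination hXY
  · rw [Ne, map_eq_zero_iff _ (algebraMap F K).injective]
    exact hw1ne
  · rw [map_neg, map_one]
    simp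
  · exact two_ne_zero
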